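/- Let k ≥ 3 be an integer, p a prime, and n ≥ 1 an integer. Suppose F is a collection of m vectors in Z_{p^{k-1}}^n such that for every k vectors v_1, ..., v_k ∈ F (repetitions allowed), if v_1, ..., v_k are not all equal, then there exists a coordinate i ∈ [n] for which the set of entries {(v_1)_i, ..., (v_k)_i} has exactly 2 distinct elements. Then there exists an (n(k-1), m) local PMF for k-cycles over F_p. -/

import Mathlib

open Finset

section aux

variable {K : Type*} [Field K] {p r : ℕ} [Fact p.Prime] [Algebra (ZMod p) K]

noncomputable def evec (b : Module.Basis (Fin r) (ZMod p) K) (j : Fin (r + 1)) : K :=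
  if h : j = Fin.last r then -∑ t, b t else b (j.castPred h)

lemma evec_sum (b : Module.Basis (Fin r) (ZMod p) K) : ∑ j, evec b j = 0 := by
  rw [Fin.sum_univ_castSucc]
  have h1 : ∀ t : Fin r, evec b (Fin.castSucc t) = b t := by
    intro t
    rw [evec, dif_neg (Fin.castSucc_lt_last t).ne, Fin.castPred_castSucc]
  rw [Finset.sum_congr rfl (fun t _ => h1 t), evec, dif_pos rfl]
  ring

lemma evec_subsum_ne_zero_of_not_last (b : Module.Basis (Fin r) (ZMod p) K)
    (S : Finset (Fin (r + 1))) (hne : S.Nonempty) (hlast : Fin.last r ∉ S) :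
    ∑ j ∈ S, evec b j ≠ 0 := by
  obtain ⟨j₁, hj₁⟩ := hne
  have hmem : ∀ j ∈ S, j ≠ Fin.last r := fun j hj h => hlast (h ▸ hj)
  intro hzero
  have h2 : ∑ j ∈ S, (b.repr (evec b j)) (j₁.castPred (hmem j₁ hj₁)) = 0 := by
    rw [← Finsupp.finset_sum_apply, ← map_sum, hzero, map_zero]
    rfl
  rw [Finset.sum_congr rfl (fun j hj => by
      rw [evec, dif_neg (hmem j hj), Module.Basis.repr_self, Finsupp.single_apply]
      exact if_congr (by rw [Fin.castPred_inj]) rfl rfl)] at h2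
  rw [Finset.sum_ite_eq' S j₁ (fun _ => (1 : ZMod p)), if_pos hj₁] at h2
  exact one_ne_zero h2

lemma evec_subsum_ne_zero (b : Module.Basis (Fin r) (ZMod p) K)
    (S : Finset (Fin (r + 1))) (hne : S.Nonempty) (hU : S ≠ Finset.univ) :
    ∑ j ∈ S, evec b j ≠ 0 := by
  by_cases hlast : Fin.last r ∈ S
  · have hc : Sᶜ.Nonempty := by
      rw [← Finset.card_pos, Finset.card_compl]
      have := (Finset.card_lt_card (Finset.ssubset_univ_iff.mpr hU))
      rw [Finset.card_univ] at this
      omega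
    have hcl : Fin.last r ∉ Sᶜ := by simp [hlast]
    have := evec_subsum_ne_zero_of_not_last b Sᶜ hc hcl
    intro h0
    apply this
    have := Finset.sum_add_sum_compl S (evec b)
    rw [evec_sum, h0, zero_add] at this
    exact this
  · exact evec_subsum_ne_zero_of_not_last b S ⟨_, hne.choose_spec⟩ hlast

end aux

theorem stmt_2 (k p n m : ℕ) (hk : 3 ≤ k) (hp : p.Prime) (hn : 1 ≤ n)
    (F : Fin m → Fin n → Fin (p ^ (k - 1))) (hinj : Function.Injective F)
    (hF : ∀ v : Fin k → Fin n → Fin (p ^ (k - 1)),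
      (∀ j, ∃ i, F i = v j) → ¬ (∀ a b, v a = v b) →
      ∃ i : Fin n, (Finset.univ.image fun j => v j i).card = 2) :
    ∃ x : Fin m → Fin k → Fin (n * (k - 1)) → ZMod p,
      (∀ i, ∑ j, x i j = 0) ∧
      ∀ idx : Fin k → Fin m, ∑ j, x (idx j) j = 0 → ∀ a b, idx a = idx b := by
  haveI : Fact p.Prime := ⟨hp⟩
  obtain ⟨r, rfl⟩ : ∃ r, k = r + 1 := ⟨k - 1, by omega⟩
  have hr : r ≠ 0 := by omega
  show ∃ x : Fin m → Fin (r + 1) → Fin (n * r) → ZMod p,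
      (∀ i, ∑ j, x i j = 0) ∧
      ∀ idx : Fin (r + 1) → Fin m, ∑ j, x (idx j) j = 0 → ∀ a b, idx a = idx b
  haveI : Fintype (GaloisField p r) := Fintype.ofFinite _
  have hfin : Module.finrank (ZMod p) (GaloisField p r) = r := GaloisField.finrank p hr
  let b : Module.Basis (Fin r) (ZMod p) (GaloisField p r) := Module.finBasisOfFinrankEq _ _ hfin
  have hcard : Fintype.card (Fin (p ^ r)) = Fintype.card (GaloisField p r) := by
    rw [Fintype.card_fin, ← Nat.card_eq_fintype_card, GaloisField.card p r hr]
  let g : Fin (p ^ r) ≃ GaloisField p r := Fintype.equivOfCardEq hcard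
  let P : Fin (n * r) → Fin n × Fin r := finProdFinEquiv.symm
  refine ⟨fun i j s => b.equivFun (evec b j * g (F i (P s).1)) (P s).2, ?_, ?_⟩
  · intro i
    funext s
    rw [Finset.sum_apply]
    calc ∑ j, (b.equivFun (evec b j * g (F i (P s).1))) (P s).2
        = (∑ j, b.equivFun (evec b j * g (F i (P s).1))) (P s).2 := by
          rw [Finset.sum_apply]
      _ = (b.equivFun (∑ j, evec b j * g (F i (P s).1))) (P s).2 := by
          rw [map_sum]
      _ = 0 := by rw [← Finset.sum_mul, evec_sum, zero_mul, map_zero]; rfl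
  · intro idx hsum
    by_contra hne
    push_neg at hne
    obtain ⟨a0, b0, hab⟩ := hne
    have hnc : ¬ ∀ a b : Fin (r+1), (fun j => F (idx j)) a = (fun j => F (idx j)) b := by
      intro h; exact hab (hinj (h a0 b0))
    obtain ⟨i, hc2⟩ := hF (fun j => F (idx j)) (fun j => ⟨idx j, rfl⟩) hnc
    have hkey : ∑ j, evec b j * g (F (idx j) i) = 0 := by
      rw [← (LinearEquiv.map_eq_zero_iff b.equivFun)]
      funext t
      have h0 := congrFun hsum (finProdFinEquiv (i, t))
      simp only [Finset.sum_apply, Pi.zero_apply, map_sum, P,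
        Equiv.symm_apply_apply] at h0 ⊢
      exact h0
    obtain ⟨w₁, w₂, hw, himg⟩ := Finset.card_eq_two.mp hc2
    have hmemI : ∀ j : Fin (r+1), F (idx j) i = w₁ ∨ F (idx j) i = w₂ := by
      intro j
      have : F (idx j) i ∈ Finset.univ.image fun j => F (idx j) i :=
        Finset.mem_image_of_mem _ (Finset.mem_univ j)
      rw [himg] at this
      simpa using this
    set S : Finset (Fin (r+1)) := Finset.univ.filter (fun j => F (idx j) i = w₁) with hS
    set T : Finset (Fin (r+1)) := Finset.univ.filter (fun j => ¬ F (idx j) i = w₁) with hT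
    have hSne : S.Nonempty := by
      have hw1 : w₁ ∈ Finset.univ.image fun j => F (idx j) i := by rw [himg]; simp
      obtain ⟨j, _, hj⟩ := Finset.mem_image.mp hw1
      exact ⟨j, by simp [hS, hj]⟩
    have hSU : S ≠ Finset.univ := by
      have hw2 : w₂ ∈ Finset.univ.image fun j => F (idx j) i := by rw [himg]; simp
      obtain ⟨j, _, hj⟩ := Finset.mem_image.mp hw2
      intro h
      have hjS : j ∈ S := h ▸ Finset.mem_univ j
      rw [hS, Finset.mem_filter] at hjS
      exact hw (hjS.2 ▸ hj ▸ rfl)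
    have hEne : ∑ j ∈ S, evec b j ≠ 0 := evec_subsum_ne_zero b S hSne hSU
    have h1 : ∑ j ∈ S, evec b j * g (F (idx j) i) = (∑ j ∈ S, evec b j) * g w₁ := by
      rw [Finset.sum_mul]
      refine Finset.sum_congr rfl fun j hj => ?_
      rw [hS, Finset.mem_filter] at hj
      rw [hj.2]
    have h2 : ∑ j ∈ T, evec b j * g (F (idx j) i) = (∑ j ∈ T, evec b j) * g w₂ := by
      rw [Finset.sum_mul]
      refine Finset.sum_congr rfl fun j hj => ?_
      rw [hT, Finset.mem_filter] at hj
      rcases hmemI j with h | h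
      · exact absurd h hj.2
      · rw [h]
    have hTS : ∑ j ∈ T, evec b j = - ∑ j ∈ S, evec b j := by
      have h3 := Finset.sum_filter_add_sum_filter_not Finset.univ
        (fun j => F (idx j) i = w₁) (evec b)
      rw [evec_sum, ← hS, ← hT] at h3
      linear_combination h3
    have hfull := Finset.sum_filter_add_sum_filter_not Finset.univ
      (fun j => F (idx j) i = w₁) (fun j => evec b j * g (F (idx j) i))
    rw [hkey, ← hS, ← hT, h1, h2, hTS] at hfull
    have hgne : g w₁ - g w₂ ≠ 0 :=
      sub_ne_zero.mpr (fun hgw => hw (g.injective hgw))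
    exact mul_ne_zero hEne hgne (by linear_combination hfull)
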